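/- arXiv:1603.03649 — 4 statements merged into one kernel-verified Lean document; each statement's English description precedes it below -/
import Mathlib

section
/- For elements a, b of a commutative ring R with a, 1-a, b, 1-b, a-b all units, the map λ sending the pre-Bloch symbol [a] to a ⊗ (1-a) in R^× ⊗_ℤ R^× satisfies: λ applied to the five-term element [a] - [b] + [b/a] - [(1-a^{-1})/(1-b^{-1})] + [(1-a)/(1-b)] equals a ⊗ ((1-a)/(1-b)) + ((1-a)/(1-b)) ⊗ a. Consequently λ induces a well-defined homomorphism from the pre-Bloch group 𝔭(R) to (R^× ⊗_ℤ R^×)_σ. -/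
open scoped TensorProduct

/-- `R^× ⊗_ℤ R^×`. -/
abbrev unitsTensor (R : Type) [CommRing R] : Type :=
  (Additive Rˣ) ⊗[ℤ] (Additive Rˣ)

/-- Symbols `[a]` of the pre-Bloch group: units `a` with `1 - a` also a unit. -/
abbrev BlochSym (R : Type) [CommRing R] : Type := {a : Rˣ // IsUnit (1 - (a : R))}

/-- The element `a ⊗ (1 - a)` of `R^× ⊗_ℤ R^×`. -/
noncomputable def lamTerm {R : Type} [CommRing R] (a : Rˣ) (h : IsUnit (1 - (a : R))) :
    unitsTensor R :=
  Additive.ofMul a ⊗ₜ[ℤ] Additive.ofMul h.unit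

/-- The subgroup of five-term relations defining the pre-Bloch group: for `a, b` with
`a, 1-a, b, 1-b, a-b` units, the element
`[a] - [b] + [b/a] - [(1-a⁻¹)/(1-b⁻¹)] + [(1-a)/(1-b)]`. -/
def preBlochRel (R : Type) [CommRing R] : AddSubgroup (FreeAbelianGroup (BlochSym R)) :=
  AddSubgroup.closure
    {x | ∃ a b c d e : BlochSym R,
      IsUnit ((a.1 : R) - (b.1 : R)) ∧
      (c.1 : Rˣ) * a.1 = b.1 ∧
      (d.1 : R) * (1 - ((b.1⁻¹ : Rˣ) : R)) = 1 - ((a.1⁻¹ : Rˣ) : R) ∧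
      (e.1 : R) * (1 - (b.1 : R)) = 1 - (a.1 : R) ∧
      x = FreeAbelianGroup.of a - FreeAbelianGroup.of b + FreeAbelianGroup.of c -
            FreeAbelianGroup.of d + FreeAbelianGroup.of e}

/-- The pre-Bloch group `𝔭(R)`. -/
abbrev preBloch (R : Type) [CommRing R] : Type := FreeAbelianGroup (BlochSym R) ⧸ preBlochRel R

/-- The subgroup of `R^× ⊗ R^×` generated by the elements `c ⊗ d + d ⊗ c`. -/
def sigmaRel (R : Type) [CommRing R] : Submodule ℤ (unitsTensor R) :=
  Submodule.span ℤ {x | ∃ c d : Rˣ,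
    x = Additive.ofMul c ⊗ₜ[ℤ] Additive.ofMul d + Additive.ofMul d ⊗ₜ[ℤ] Additive.ofMul c}

/-- `(R^× ⊗_ℤ R^×)_σ`. -/
abbrev unitsTensorSigma (R : Type) [CommRing R] : Type := unitsTensor R ⧸ sigmaRel R

noncomputable def tt {R : Type} [CommRing R] (x y : Rˣ) : unitsTensor R :=
  Additive.ofMul x ⊗ₜ[ℤ] Additive.ofMul y

lemma tt_mul_left {R : Type} [CommRing R] (x y z : Rˣ) :
    tt (x * y) z = tt x z + tt y z := by
  simp [tt, ofMul_mul, TensorProduct.add_tmul]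

lemma tt_mul_right {R : Type} [CommRing R] (x y z : Rˣ) :
    tt x (y * z) = tt x y + tt x z := by
  simp [tt, ofMul_mul, TensorProduct.tmul_add]

lemma tt_inv_left {R : Type} [CommRing R] (x z : Rˣ) :
    tt x⁻¹ z = - tt x z := by
  simp [tt, ofMul_inv, TensorProduct.neg_tmul]

lemma tt_inv_right {R : Type} [CommRing R] (x z : Rˣ) :
    tt x z⁻¹ = - tt x z := by
  simp [tt, ofMul_inv, TensorProduct.tmul_neg]

lemma key {R : Type} [CommRing R] (a b c d e : Rˣ) (ha : IsUnit (1 - (a : R)))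
    (hb : IsUnit (1 - (b : R))) (hc : IsUnit (1 - (c : R))) (hd : IsUnit (1 - (d : R)))
    (he : IsUnit (1 - (e : R))) (hab : IsUnit ((a : R) - (b : R)))
    (h1 : (c : Rˣ) * a = b)
    (h2 : (d : R) * (1 - ((b⁻¹ : Rˣ) : R)) = 1 - ((a⁻¹ : Rˣ) : R))
    (h3 : (e : R) * (1 - (b : R)) = 1 - (a : R)) :
    lamTerm a ha - lamTerm b hb + lamTerm c hc - lamTerm d hd + lamTerm e he =
      Additive.ofMul a ⊗ₜ[ℤ] Additive.ofMul e + Additive.ofMul e ⊗ₜ[ℤ] Additive.ofMul a := by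
  set u := ha.unit with hu
  set v := hb.unit with hv
  set w := hab.unit with hw
  have hau : (u : R) = 1 - a := ha.unit_spec
  have hbv : (v : R) = 1 - b := hb.unit_spec
  have hwc : (w : R) = (a : R) - b := hab.unit_spec
  have haa : (a : R) * ((a⁻¹ : Rˣ) : R) = 1 := Units.mul_inv a
  have hbb : (b : R) * ((b⁻¹ : Rˣ) : R) = 1 := Units.mul_inv b
  -- ring-level form of h2 : d * (1-b) * a = (1-a) * b
  have h2' : (d : R) * (1 - (b : R)) * a = (1 - (a : R)) * b := by
    linear_combination (-((a:R)*b))*h2 + (-((a:R)*d))*hbb + (b:R)*haa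
  -- unit equalities
  have hcu : c = b * a⁻¹ := by
    rw [← h1]; group
  have hc1 : hc.unit = w * a⁻¹ := by
    rw [eq_mul_inv_iff_mul_eq]
    ext
    push_cast [hc.unit_spec, hwc]
    have : (c : R) * a = b := by exact_mod_cast congrArg (Units.val) h1
    linear_combination -this
  have heu : e = u * v⁻¹ := by
    rw [eq_mul_inv_iff_mul_eq]
    ext
    push_cast [hau, hbv]
    linear_combination h3
  have he1 : he.unit = w * v⁻¹ := by
    rw [eq_mul_inv_iff_mul_eq]
    ext
    push_cast [he.unit_spec, hbv, hwc]
    linear_combination -h3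
  have hdu : d = u * b * a⁻¹ * v⁻¹ := by
    have : d * v * a = u * b := by
      ext
      push_cast [hau, hbv]
      linear_combination h2'
    rw [eq_mul_inv_iff_mul_eq, eq_mul_inv_iff_mul_eq]
    exact this
  have hd1 : hd.unit = w * a⁻¹ * v⁻¹ := by
    have : hd.unit * v * a = w := by
      ext
      push_cast [hd.unit_spec, hau, hbv, hwc]
      linear_combination -h2'
    rw [eq_mul_inv_iff_mul_eq, eq_mul_inv_iff_mul_eq]
    exact this
  have L : ∀ (x : Rˣ) (h : IsUnit (1 - (x : R))), lamTerm x h = tt x h.unit := fun _ _ => rfl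
  rw [L a ha, L b hb, L c hc, L d hd, L e he, hc1, hd1, he1, hcu, hdu, heu]
  show _ = tt a (u * v⁻¹) + tt (u * v⁻¹) a
  simp only [tt_mul_left, tt_mul_right, tt_inv_left, tt_inv_right, neg_add_rev, neg_neg]
  abel

/-- (i) `λ([a]) = a ⊗ (1-a)` applied to the five-term relation gives
`a ⊗ ((1-a)/(1-b)) + ((1-a)/(1-b)) ⊗ a`; (ii) consequently `λ` induces a well-defined
homomorphism `𝔭(R) → (R^× ⊗_ℤ R^×)_σ`. -/
theorem stmt_1 (R : Type) [CommRing R] :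
    (∀ (a b c d e : Rˣ) (ha : IsUnit (1 - (a : R))) (hb : IsUnit (1 - (b : R)))
        (hc : IsUnit (1 - (c : R))) (hd : IsUnit (1 - (d : R))) (he : IsUnit (1 - (e : R))),
      IsUnit ((a : R) - (b : R)) →
      (c : Rˣ) * a = b →
      (d : R) * (1 - ((b⁻¹ : Rˣ) : R)) = 1 - ((a⁻¹ : Rˣ) : R) →
      (e : R) * (1 - (b : R)) = 1 - (a : R) →
      lamTerm a ha - lamTerm b hb + lamTerm c hc - lamTerm d hd + lamTerm e he =
        Additive.ofMul a ⊗ₜ[ℤ] Additive.ofMul e + Additive.ofMul e ⊗ₜ[ℤ] Additive.ofMul a) ∧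
    (∃ φ : preBloch R →+ unitsTensorSigma R,
      ∀ s : BlochSym R,
        φ (QuotientAddGroup.mk' (preBlochRel R) (FreeAbelianGroup.of s)) =
          Submodule.Quotient.mk (lamTerm s.1 s.2)) := by

  refine ⟨fun a b c d e ha hb hc hd he hab h1 h2 h3 =>
    key a b c d e ha hb hc hd he hab h1 h2 h3, ?_⟩
  set ψ : FreeAbelianGroup (BlochSym R) →+ unitsTensorSigma R :=
    FreeAbelianGroup.lift (fun s => Submodule.Quotient.mk (lamTerm s.1 s.2)) with hψ
  have hker : ∀ x ∈ preBlochRel R, ψ x = 0 := by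
    have : preBlochRel R ≤ ψ.ker := by
      rw [preBlochRel, AddSubgroup.closure_le]
      rintro x ⟨a, b, c, d, e, hab, h1, h2, h3, rfl⟩
      simp only [SetLike.mem_coe, AddMonoidHom.mem_ker, map_add, map_sub, hψ,
        FreeAbelianGroup.lift_apply_of, ← Submodule.Quotient.mk_sub, ← Submodule.Quotient.mk_add]
      rw [key a.1 b.1 c.1 d.1 e.1 a.2 b.2 c.2 d.2 e.2 hab h1 h2 h3,
        Submodule.Quotient.mk_eq_zero]
      exact Submodule.subset_span ⟨a.1, e.1, rfl⟩
    exact fun x hx => this hx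
  refine ⟨QuotientAddGroup.lift (preBlochRel R) ψ hker, fun s => ?_⟩
  show ψ (FreeAbelianGroup.of s) = _
  simp [hψ, FreeAbelianGroup.lift_apply_of]
end

section
/- Let G be an abelian group and M a finitely generated ℤ[G]-module such that the coinvariants H_0(G, M) = M_G are zero. Then H_n(G, M) = 0 for all n ≥ 0. -/
open CategoryTheory

noncomputable instance repEnoughProjectives (G : Type) [Group G] :
    EnoughProjectives (Rep.{0} ℤ G) :=
  (Rep.equivalenceModuleMonoidAlgebra (k := ℤ) (G := G)).enoughProjectives_iff.mpr
    inferInstance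

/-- The subgroup of a representation generated by the elements `g • m - m`. -/
noncomputable def coinvRel {G : Type} [Group G] (M : Rep.{0} ℤ G) : AddSubgroup M :=
  AddSubgroup.closure {x : M | ∃ (g : G) (m : M), x = M.ρ g m - m}

/-- The underlying additive map of a morphism of representations. -/
noncomputable def repHom {G : Type} [Group G] {M N : Rep.{0} ℤ G} (f : M ⟶ N) : M →+ N :=
  AddMonoidHom.mk' (fun x => f.hom x) (map_add f.hom)

lemma repHom_comm {G : Type} [Group G] {M N : Rep.{0} ℤ G} (f : M ⟶ N) (g : G) (m : M) :
    repHom f (M.ρ g m) = N.ρ g (repHom f m) := by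
  exact Rep.hom_comm_apply f g m

lemma coinvRel_le {G : Type} [Group G] {M N : Rep.{0} ℤ G} (f : M ⟶ N) :
    coinvRel M ≤ (coinvRel N).comap (repHom f) := by
  rw [coinvRel, AddSubgroup.closure_le]
  rintro x ⟨g, m, rfl⟩
  simp only [Set.mem_setOf_eq, AddSubgroup.coe_comap, Set.mem_preimage, SetLike.mem_coe,
    map_sub, repHom_comm]
  exact AddSubgroup.subset_closure ⟨g, repHom f m, rfl⟩

/-- The induced map on coinvariants. -/
noncomputable def coinvMap {G : Type} [Group G] {M N : Rep.{0} ℤ G} (f : M ⟶ N) :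
    (M ⧸ coinvRel M) →+ (N ⧸ coinvRel N) :=
  QuotientAddGroup.map _ _ (repHom f) (coinvRel_le f)

/-- The coinvariants functor `Rep.{0} ℤ G ⥤ Ab`, `M ↦ M_G`. -/
noncomputable def coinvFunctor (G : Type) [Group G] : Rep.{0} ℤ G ⥤ AddCommGrpCat where
  obj M := AddCommGrpCat.of (M ⧸ coinvRel M)
  map {M N} f := AddCommGrpCat.ofHom (coinvMap f)
  map_id M := by
    ext x
    rfl
  map_comp {M N P} f g := by
    ext x
    rfl

noncomputable instance coinvAdditive (G : Type) [Group G] : (coinvFunctor G).Additive where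
  map_add := by
    intros M N f g
    ext x
    induction x using QuotientAddGroup.induction_on with
    | H m => rfl

/-- Group homology `H_n(G, M)`, as the left derived functors of coinvariants. -/
noncomputable def derivedHomology (G : Type) [Group G] (n : ℕ) (M : Rep.{0} ℤ G) : AddCommGrpCat :=
  ((coinvFunctor G).leftDerived n).obj M

/-! ### Auxiliary material -/

section Aux

variable {G : Type} [CommGroup G]

/-- The representation on the bare type of `M` relative to `AddCommGroup.toIntModule`. -/
noncomputable def rhoInt (M : Rep.{0} ℤ G) :
    G →* (@LinearMap ℤ ℤ _ _ (RingHom.id ℤ) M M _ _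
      (AddCommGroup.toIntModule _) (AddCommGroup.toIntModule _)) where
  toFun g := AddMonoidHom.toIntLinearMap
    (AddMonoidHom.mk' (fun x => M.ρ g x) (fun x y => map_add (M.ρ g) x y))
  map_one' := by
    ext x
    show M.ρ 1 x = x
    simp
  map_mul' g h := by
    ext x
    show M.ρ (g * h) x = M.ρ g (M.ρ h x)
    simp

lemma rhoInt_apply (M : Rep.{0} ℤ G) (g : G) (x : M) : rhoInt M g x = M.ρ g x := rfl

/-- The augmentation map. -/
noncomputable def aug (G : Type) [CommGroup G] : MonoidAlgebra ℤ G →ₐ[ℤ] ℤ :=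
  MonoidAlgebra.lift ℤ ℤ G 1

@[simp] lemma aug_single (g : G) (n : ℤ) : aug G (MonoidAlgebra.single g n) = n := by
  simp [aug, MonoidAlgebra.lift_single]

/-- make a Rep endomorphism from an additive map commuting with the action -/
noncomputable def mkHom (M : Rep.{0} ℤ G) (f : M →+ M)
    (hf : ∀ (g : G) (x : M), f (M.ρ g x) = M.ρ g (f x)) : M ⟶ M :=
  letI := M.hV2
  ConcreteCategory.ofHom (C := Rep.{0} ℤ G)
  (LinearMap.intertwiningMap_of_isIntertwiningMap M.ρ M.ρ
    (@LinearMap.mk ℤ ℤ _ _ (RingHom.id ℤ) M.V M.V _ _ M.hV2 M.hV2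
      { toFun := f, map_add' := map_add f }
      (fun n x => by
        have h1 := int_smul_eq_zsmul M.hV2 n x
        have h2 := int_smul_eq_zsmul M.hV2 n (f x)
        exact (congrArg f h1).trans ((map_zsmul f n x).trans h2.symm)))
    (fun g x => by
      show f (M.ρ g x) = M.ρ g (f x)
      exact hf g x))

/-- The action of `r : ℤ[G]` as a morphism in `Rep.{0} ℤ G`. -/
noncomputable def actHom (M : Rep.{0} ℤ G) (r : MonoidAlgebra ℤ G) : M ⟶ M :=
  mkHom M (Representation.asAlgebraHom (rhoInt M) r).toAddMonoidHom
    (fun g x => by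
      show Representation.asAlgebraHom (rhoInt M) r (M.ρ g x)
        = M.ρ g (Representation.asAlgebraHom (rhoInt M) r x)
      rw [← rhoInt_apply, ← rhoInt_apply, ← Representation.asAlgebraHom_of (rhoInt M) g,
        ← Module.End.mul_apply, ← Module.End.mul_apply, ← map_mul, ← map_mul, mul_comm])

lemma actHom_apply (M : Rep.{0} ℤ G) (r : MonoidAlgebra ℤ G) (x : M) :
    (actHom M r).hom x = Representation.asAlgebraHom (rhoInt M) r x := rfl

lemma hom_comm_asAlgebraHom {M N : Rep.{0} ℤ G} (f : M ⟶ N) (r : MonoidAlgebra ℤ G) (x : M) :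
    repHom f (Representation.asAlgebraHom (rhoInt M) r x)
      = Representation.asAlgebraHom (rhoInt N) r (repHom f x) := by
  induction r using MonoidAlgebra.induction with
  | zero => simp
  | single_add g b rest _ _ ih =>
      rw [map_add, map_add, LinearMap.add_apply, LinearMap.add_apply, map_add, ih]
      congr 1
      rw [Representation.asAlgebraHom_single, Representation.asAlgebraHom_single,
        LinearMap.smul_apply, LinearMap.smul_apply]
      exact (map_zsmul (repHom f) b (rhoInt M g x)).trans
        (congrArg (b • ·) (repHom_comm f g x))

/-- naturality of `actHom` -/
lemma actHom_naturality {M N : Rep.{0} ℤ G} (f : M ⟶ N) (r : MonoidAlgebra ℤ G) :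
    actHom M r ≫ f = f ≫ actHom N r := by
  letI := M.hV2; letI := N.hV2
  refine Rep.hom_ext (Representation.IntertwiningMap.ext (LinearMap.ext fun x => ?_))
  show f.hom ((actHom M r).hom x) = (actHom N r).hom (f.hom x)
  exact hom_comm_asAlgebraHom f r x

lemma coinv_mk_eq {M : Rep.{0} ℤ G} (g : G) (m : M) :
    (QuotientAddGroup.mk (M.ρ g m) : M ⧸ coinvRel M) = QuotientAddGroup.mk m := by
  rw [QuotientAddGroup.eq_iff_sub_mem]
  exact AddSubgroup.subset_closure ⟨g, m, rfl⟩

lemma coinv_mk_act (M : Rep.{0} ℤ G) (r : MonoidAlgebra ℤ G) (m : M) :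
    (QuotientAddGroup.mk (Representation.asAlgebraHom (rhoInt M) r m) : M ⧸ coinvRel M)
      = aug G r • QuotientAddGroup.mk m := by
  induction r using MonoidAlgebra.induction with
  | zero => simp
  | single_add g b rest _ _ ih =>
      rw [map_add, LinearMap.add_apply]
      have : (QuotientAddGroup.mk (Representation.asAlgebraHom (rhoInt M)
          (MonoidAlgebra.single g b) m + Representation.asAlgebraHom (rhoInt M) rest m)
            : M ⧸ coinvRel M)
          = QuotientAddGroup.mk (Representation.asAlgebraHom (rhoInt M)
              (MonoidAlgebra.single g b) m)
            + QuotientAddGroup.mk (Representation.asAlgebraHom (rhoInt M) rest m) := rfl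
      rw [this, ih, map_add, add_smul]
      congr 1
      rw [Representation.asAlgebraHom_single, LinearMap.smul_apply]
      have h1 : (QuotientAddGroup.mk (b • rhoInt M g m) : M ⧸ coinvRel M)
          = b • QuotientAddGroup.mk (rhoInt M g m) :=
        map_zsmul (QuotientAddGroup.mk' (coinvRel M)) b (rhoInt M g m)
      rw [h1, rhoInt_apply, coinv_mk_eq]
      have h2 : aug G (MonoidAlgebra.single g b) = b := aug_single g b
      rw [h2]

lemma coinvFunctor_map_actHom (M : Rep.{0} ℤ G) (r : MonoidAlgebra ℤ G) (hr : aug G r = 1) :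
    (coinvFunctor G).map (actHom M r) = 𝟙 _ := by
  ext x
  induction x using QuotientAddGroup.induction_on with
  | H m =>
    show coinvMap (actHom M r) (QuotientAddGroup.mk m) = QuotientAddGroup.mk m
    have : coinvMap (actHom M r) (QuotientAddGroup.mk m)
        = QuotientAddGroup.mk (repHom (actHom M r) m) := rfl
    rw [this]
    have : repHom (actHom M r) m = Representation.asAlgebraHom (rhoInt M) r m := rfl
    rw [this, coinv_mk_act, hr, one_smul]

end Aux

section Derived

variable {G : Type} [CommGroup G]

lemma single₀_succ_isZero (M : Rep.{0} ℤ G) (i : ℕ) :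
    Limits.IsZero (((ChainComplex.single₀ (Rep.{0} ℤ G)).obj M).X (i + 1)) :=
  HomologicalComplex.isZero_single_obj_X (ComplexShape.down ℕ) 0 M (i + 1) (by simp)

lemma leftDerived_actHom (M : Rep.{0} ℤ G) (r : MonoidAlgebra ℤ G) (hr : aug G r = 1) (n : ℕ) :
    ((coinvFunctor G).leftDerived n).map (actHom M r) = 𝟙 _ := by
  let P : ProjectiveResolution M := ProjectiveResolution.of M
  let φ : P.complex ⟶ P.complex :=
    { f := fun i => actHom (P.complex.X i) r
      comm' := fun i j _ => actHom_naturality (P.complex.d i j) r }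
  have w : φ ≫ P.π = P.π ≫ (ChainComplex.single₀ (Rep.{0} ℤ G)).map (actHom M r) := by
    apply HomologicalComplex.hom_ext
    intro i
    cases i with
    | zero =>
      rw [HomologicalComplex.comp_f, HomologicalComplex.comp_f,
        ChainComplex.single₀_map_f_zero]
      exact actHom_naturality (P.π.f 0) r
    | succ i =>
      exact (single₀_succ_isZero M i).eq_of_tgt _ _
  rw [Functor.leftDerived_map_eq (coinvFunctor G) n (actHom M r) φ w]
  have hφ : ((coinvFunctor G).mapHomologicalComplex (ComplexShape.down ℕ)).map φ = 𝟙 _ := by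
    apply HomologicalComplex.hom_ext
    intro i
    rw [Functor.mapHomologicalComplex_map_f, HomologicalComplex.id_f]
    exact coinvFunctor_map_actHom _ r hr
  rw [Functor.comp_map, hφ, CategoryTheory.Functor.map_id, Category.id_comp, Iso.hom_inv_id]

lemma leftDerived_map_zero (M : Rep.{0} ℤ G) (n : ℕ) :
    ((coinvFunctor G).leftDerived n).map (0 : M ⟶ M) = 0 := by
  let P : ProjectiveResolution M := ProjectiveResolution.of M
  have w : (0 : P.complex ⟶ P.complex) ≫ P.π
      = P.π ≫ (ChainComplex.single₀ (Rep.{0} ℤ G)).map (0 : M ⟶ M) := by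
    apply HomologicalComplex.hom_ext
    intro i
    cases i with
    | zero =>
      rw [HomologicalComplex.comp_f, HomologicalComplex.comp_f,
        ChainComplex.single₀_map_f_zero, HomologicalComplex.zero_f, Limits.zero_comp]
      exact Limits.comp_zero.symm
    | succ i =>
      exact (single₀_succ_isZero M i).eq_of_tgt _ _
  rw [Functor.leftDerived_map_eq (coinvFunctor G) n (0 : M ⟶ M) 0 w]
  rw [Functor.comp_map, Functor.map_zero, Functor.map_zero, Limits.zero_comp,
    Limits.comp_zero]

end Derived

section Nakayama

variable {G : Type} [CommGroup G]

lemma aug_of (g : G) : aug G (MonoidAlgebra.of ℤ G g) = 1 := aug_single g 1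

lemma exists_killer (M : Rep.{0} ℤ G)
    (hfg : ∃ S : Finset M, ∀ N : AddSubgroup M,
      (↑S : Set M) ⊆ N → (∀ (g : G) (x : M), x ∈ N → M.ρ g x ∈ N) → N = ⊤)
    (h0 : coinvRel M = ⊤) :
    ∃ r : MonoidAlgebra ℤ G, aug G r = 1 ∧
      ∀ x : M, Representation.asAlgebraHom (rhoInt M) r x = 0 := by
  letI : Module (MonoidAlgebra ℤ G) M :=
    Module.compHom M (Representation.asAlgebraHom (rhoInt M)).toRingHom
  have hsmul : ∀ (r : MonoidAlgebra ℤ G) (x : M),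
      r • x = Representation.asAlgebraHom (rhoInt M) r x := fun r x => rfl
  have hof : ∀ (g : G) (x : M), (MonoidAlgebra.of ℤ G g) • x = M.ρ g x := by
    intro g x
    rw [hsmul, Representation.asAlgebraHom_of]
    rfl
  set I : Ideal (MonoidAlgebra ℤ G) :=
    Ideal.span (Set.range fun g : G => MonoidAlgebra.of ℤ G g - 1) with hI
  have hfg' : (⊤ : Submodule (MonoidAlgebra ℤ G) M).FG := by
    obtain ⟨S, hS⟩ := hfg
    refine ⟨S, ?_⟩
    have h1 := hS (Submodule.span (MonoidAlgebra ℤ G) (↑S : Set M)).toAddSubgroup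
      (fun x hx => Submodule.subset_span hx)
      (fun g x hx => by
        rw [Submodule.mem_toAddSubgroup] at hx ⊢
        rw [← hof g x]
        exact Submodule.smul_mem _ _ hx)
    refine Submodule.eq_top_iff'.mpr fun x => ?_
    have h2 := (AddSubgroup.eq_top_iff' _).mp h1 x
    rwa [Submodule.mem_toAddSubgroup] at h2
  have hle : (⊤ : Submodule (MonoidAlgebra ℤ G) M) ≤ I • ⊤ := by
    intro x _
    have hx : x ∈ coinvRel M := h0 ▸ AddSubgroup.mem_top x
    have hsub : coinvRel M ≤ (I • (⊤ : Submodule (MonoidAlgebra ℤ G) M)).toAddSubgroup := by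
      rw [coinvRel, AddSubgroup.closure_le]
      rintro y ⟨g, m, rfl⟩
      rw [SetLike.mem_coe, Submodule.mem_toAddSubgroup]
      have hy : M.ρ g m - m = (MonoidAlgebra.of ℤ G g - 1) • m := by
        rw [sub_smul, one_smul, hof]
      rw [hy]
      exact Submodule.smul_mem_smul (Ideal.subset_span ⟨g, rfl⟩) Submodule.mem_top
    exact hsub hx
  obtain ⟨r, hr1, hr0⟩ :=
    Submodule.exists_sub_one_mem_and_smul_eq_zero_of_fg_of_le_smul I ⊤ hfg' hle
  refine ⟨r, ?_, fun x => by rw [← hsmul]; exact hr0 x Submodule.mem_top⟩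
  have hker : I ≤ RingHom.ker (aug G).toRingHom := by
    rw [hI, Ideal.span_le]
    rintro y ⟨g, rfl⟩
    rw [SetLike.mem_coe, RingHom.mem_ker]
    show aug G (MonoidAlgebra.of ℤ G g - 1) = 0
    rw [map_sub, map_one, aug_of, sub_self]
  have h3 : aug G (r - 1) = 0 := hker hr1
  rw [map_sub, map_one, sub_eq_zero] at h3
  exact h3

end Nakayama

/-- If `G` is an abelian group and `M` a finitely generated `ℤ[G]`-module (i.e. there is a
finite subset not contained in any proper `G`-stable subgroup) with vanishing coinvariants
`H₀(G, M) = M_G = 0`, then `H_n(G, M) = 0` for all `n`. -/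
theorem stmt_4 (G : Type) [CommGroup G] (M : Rep.{0} ℤ G)
    (hfg : ∃ S : Finset M, ∀ N : AddSubgroup M,
      (↑S : Set M) ⊆ N → (∀ (g : G) (x : M), x ∈ N → M.ρ g x ∈ N) → N = ⊤)
    (h0 : coinvRel M = ⊤) :
    ∀ n : ℕ, Subsingleton (derivedHomology G n M) := by
  intro n
  obtain ⟨r, hr1, hr0⟩ := exists_killer M hfg h0
  have h1 := leftDerived_actHom M r hr1 n
  have h2 : actHom M r = 0 := by
    letI := M.hV2
    refine Rep.hom_ext (Representation.IntertwiningMap.ext (LinearMap.ext fun x => ?_))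
    show (actHom M r).hom x = (0 : M ⟶ M).hom x
    rw [actHom_apply, hr0 x]
    rfl
  rw [h2, leftDerived_map_zero] at h1
  constructor
  intro a b
  have key : ∀ c : ((coinvFunctor G).leftDerived n).obj M, c = 0 := by
    intro c
    have e1 : (𝟙 (((coinvFunctor G).leftDerived n).obj M) :
        ((coinvFunctor G).leftDerived n).obj M ⟶ _) c = c := rfl
    rw [← e1, ← h1]
    rfl
  exact (key a).trans (key b).symm
end

section
/- Let G be an abelian group, A a commutative ring, M an A-module, and φ : G → A^× a group homomorphism, giving A and M the G-module structures via multiplication by φ(g). If H_0(G, A) = 0, then H_n(G, M) = 0 for all n ≥ 0. -/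
open CategoryTheory

/-- The representation of `G` on an `A`-module `M` through a homomorphism `φ : G → Aˣ`:
`g • m = φ g • m`. -/
noncomputable def repOfUnits (G : Type) [CommGroup G] (A : Type) [CommRing A]
    (M : Type) [AddCommGroup M] [Module A M] (φ : G →* Aˣ) : Rep.{0} ℤ G :=
  Rep.of (X := M)
    { toFun := fun g =>
        { toFun := fun m => (φ g : A) • m
          map_add' := fun x y => smul_add _ x y
          map_smul' := fun c x => smul_comm ((φ g : A)) c x |>.symm ▸ (smul_comm c ((φ g : A)) x).symm }
      map_one' := by ext m; simp
      map_mul' := fun g h => by ext m; simp [mul_smul] }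


section Suslin

open CategoryTheory

section AdditiveLD

variable {C D : Type*} [Category C] [Category D] [Abelian C] [Abelian D] [EnoughProjectives C]
  (F : C ⥤ D) [F.Additive] (n : ℕ)

noncomputable instance leftDerivedAdditive : (F.leftDerived n).Additive where
  map_add {X Y f f'} := by
    let P := ProjectiveResolution.of X
    let Q := ProjectiveResolution.of Y
    have w : (ProjectiveResolution.lift f P Q + ProjectiveResolution.lift f' P Q) ≫ Q.π =
        P.π ≫ (ChainComplex.single₀ C).map (f + f') := by
      rw [Preadditive.add_comp, ProjectiveResolution.lift_commutes,
        ProjectiveResolution.lift_commutes, Functor.map_add, Preadditive.comp_add]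
    rw [F.leftDerived_map_eq n (f + f') _ w,
      F.leftDerived_map_eq n f (ProjectiveResolution.lift f P Q)
        (ProjectiveResolution.lift_commutes f P Q),
      F.leftDerived_map_eq n f' (ProjectiveResolution.lift f' P Q)
        (ProjectiveResolution.lift_commutes f' P Q),
      Functor.map_add, Preadditive.add_comp, Preadditive.comp_add]

end AdditiveLD

variable (G : Type) [CommGroup G]

/-- The action of `g` as an endomorphism of a representation of an abelian group. -/
noncomputable def tauApp (g : G) (X : Rep.{0} ℤ G) : X ⟶ X :=
  X.applyAsHom g

lemma tauApp_natural (g : G) {X Y : Rep.{0} ℤ G} (f : X ⟶ Y) :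
    tauApp G g X ≫ f = f ≫ tauApp G g Y := by
  refine Rep.hom_ext (DFunLike.ext _ _ fun m => ?_)
  exact (Rep.hom_comm_apply f g m)

lemma coinv_map_tau (g : G) (X : Rep.{0} ℤ G) :
    (coinvFunctor G).map (tauApp G g X) = 𝟙 ((coinvFunctor G).obj X) := by
  ext x
  induction x using QuotientAddGroup.induction_on with
  | H m =>
    have hmem : -(X.ρ g m) + m ∈ coinvRel X := by
      have h1 : X.ρ g m - m ∈ coinvRel X := AddSubgroup.subset_closure ⟨g, m, rfl⟩
      have h2 := neg_mem h1
      rwa [neg_sub, sub_eq_neg_add] at h2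
    exact (QuotientAddGroup.eq (s := coinvRel X) (a := X.ρ g m) (b := m)).mpr hmem

/-- The levelwise action of `g` on a projective resolution. -/
noncomputable def tauChain (g : G) {X : Rep.{0} ℤ G} (P : ProjectiveResolution X) :
    P.complex ⟶ P.complex where
  f i := tauApp G g (P.complex.X i)
  comm' := by intro i j _; exact tauApp_natural G g (P.complex.d i j)

lemma tauChain_comm (g : G) {X : Rep.{0} ℤ G} (P : ProjectiveResolution X) :
    tauChain G g P ≫ P.π = P.π ≫ (ChainComplex.single₀ (Rep.{0} ℤ G)).map (tauApp G g X) := by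
  apply HomologicalComplex.hom_ext
  intro i
  rcases i with _ | n
  · simp only [HomologicalComplex.comp_f]
    rw [HomologicalComplex.single_map_f_self]
    have := tauApp_natural G g
      (P.π.f 0 ≫ (HomologicalComplex.singleObjXSelf (ComplexShape.down ℕ) 0 X).hom)
    calc (tauChain G g P).f 0 ≫ P.π.f 0
        = (tauApp G g (P.complex.X 0) ≫
            (P.π.f 0 ≫ (HomologicalComplex.singleObjXSelf (ComplexShape.down ℕ) 0 X).hom)) ≫
            (HomologicalComplex.singleObjXSelf (ComplexShape.down ℕ) 0 X).inv := by
          simp [tauChain]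
          erw [Category.comp_id]
      _ = _ := by rw [this]; simp; erw [Category.comp_id]
  · apply (HomologicalComplex.isZero_single_obj_X (ComplexShape.down ℕ) 0 X (n+1)
      (by simp)).eq_of_tgt

lemma leftDerived_map_tau (g : G) (X : Rep.{0} ℤ G) (n : ℕ) :
    ((coinvFunctor G).leftDerived n).map (tauApp G g X) = 𝟙 _ := by
  rw [(coinvFunctor G).leftDerived_map_eq n (tauApp G g X)
    (tauChain G g (ProjectiveResolution.of X)) (tauChain_comm G g _)]
  have h2 : ((coinvFunctor G).mapHomologicalComplex (ComplexShape.down ℕ)).map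
      (tauChain G g (ProjectiveResolution.of X)) = 𝟙 _ := by
    apply HomologicalComplex.hom_ext
    intro i
    simp only [Functor.mapHomologicalComplex_map_f, HomologicalComplex.id_f]
    exact coinv_map_tau G g _
  rw [Functor.comp_map, h2, CategoryTheory.Functor.map_id, Category.id_comp, Iso.hom_inv_id]

variable (A : Type) [CommRing A] (M : Type) [AddCommGroup M] [Module A M] (φ : G →* Aˣ)

/-- Scalar multiplication by `a : A` as an endomorphism of the representation. -/
noncomputable def sigmaA (a : A) : repOfUnits G A M φ ⟶ repOfUnits G A M φ :=
  ConcreteCategory.ofHom (C := Rep.{0} ℤ G)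
  { toLinearMap := (AddMonoidHom.mk' (fun m : M => a • m) (smul_add a)).toIntLinearMap
    isIntertwining' := by
      intro g; ext m
      exact smul_comm a ((φ g : A)) (show M from m) }

lemma sigmaA_zero : sigmaA G A M φ 0 = 0 := by
  ext m
  exact zero_smul A (show M from m)

lemma sigmaA_one : sigmaA G A M φ 1 = 𝟙 _ := by
  ext m
  exact one_smul A (show M from m)

lemma sigmaA_add (x y : A) :
    sigmaA G A M φ (x + y) = sigmaA G A M φ x + sigmaA G A M φ y := by
  ext m
  exact add_smul x y (show M from m)

lemma sigmaA_neg (x : A) : sigmaA G A M φ (-x) = -(sigmaA G A M φ x) := by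
  ext m
  exact neg_smul x (show M from m)

lemma sigmaA_sub (x y : A) :
    sigmaA G A M φ (x - y) = sigmaA G A M φ x - sigmaA G A M φ y := by
  rw [sub_eq_add_neg, sigmaA_add, sigmaA_neg, ← sub_eq_add_neg]

lemma sigmaA_mul (x y : A) :
    sigmaA G A M φ (x * y) = sigmaA G A M φ x ≫ sigmaA G A M φ y := by
  ext m
  exact (mul_comm y x) ▸ mul_smul y x (show M from m)

lemma sigmaA_units (g : G) :
    sigmaA G A M φ ((φ g : A)) = tauApp G g (repOfUnits G A M φ) := by
  ext m
  rfl

end Suslin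

/-- Suslin's lemma: if `G` is abelian, `A` a commutative ring, `M` an `A`-module, and
`φ : G →* Aˣ` makes `A` and `M` into `G`-modules with `H₀(G, A) = 0`, then
`H_n(G, M) = 0` for all `n`. -/
theorem stmt_5 (G : Type) [CommGroup G] (A : Type) [CommRing A]
    (M : Type) [AddCommGroup M] [Module A M] (φ : G →* Aˣ)
    (h0 : coinvRel (repOfUnits G A A φ) = ⊤) :
    ∀ n : ℕ, Subsingleton (derivedHomology G n (repOfUnits G A M φ)) := by
  intro n
  have key : ∀ x : repOfUnits G A A φ, x ∈ coinvRel (repOfUnits G A A φ) → ((coinvFunctor G).leftDerived n).map (sigmaA G A M φ x) = 0 := by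
    intro x hx
    induction hx using AddSubgroup.closure_induction with
    | mem y hy =>
      obtain ⟨g, m, rfl⟩ := hy
      show ((coinvFunctor G).leftDerived n).map
        (sigmaA G A M φ ((φ g : A) * (show A from m) - (show A from m))) = 0
      rw [sigmaA_sub, sigmaA_mul, sigmaA_units, Functor.map_sub, Functor.map_comp,
        leftDerived_map_tau, Category.id_comp, sub_self]
    | zero =>
      show ((coinvFunctor G).leftDerived n).map (sigmaA G A M φ (0 : A)) = 0
      rw [sigmaA_zero, Functor.map_zero]
    | add x y hx hy ihx ihy =>
      obtain ⟨x, rfl⟩ : ∃ x' : A, x' = x := ⟨x, rfl⟩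
      obtain ⟨y, rfl⟩ : ∃ y' : A, y' = y := ⟨y, rfl⟩
      show ((coinvFunctor G).leftDerived n).map (sigmaA G A M φ (@HAdd.hAdd A A A instHAdd x y)) = 0
      rw [sigmaA_add, Functor.map_add, ihx, ihy, add_zero]
    | neg x hx ihx =>
      obtain ⟨x, rfl⟩ : ∃ x' : A, x' = x := ⟨x, rfl⟩
      show ((coinvFunctor G).leftDerived n).map (sigmaA G A M φ (@Neg.neg A _ x)) = 0
      rw [sigmaA_neg, Functor.map_neg, ihx, neg_zero]
  have h1 : ((coinvFunctor G).leftDerived n).map (sigmaA G A M φ 1) = 0 := key (1 : A) (h0 ▸ AddSubgroup.mem_top _)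
  rw [sigmaA_one, CategoryTheory.Functor.map_id] at h1
  constructor
  intro a b
  have ha := congrFun (congrArg
    (fun (f : ((coinvFunctor G).leftDerived n).obj (repOfUnits G A M φ) ⟶
        ((coinvFunctor G).leftDerived n).obj (repOfUnits G A M φ)) =>
      (f : ((coinvFunctor G).leftDerived n).obj (repOfUnits G A M φ) →
        ((coinvFunctor G).leftDerived n).obj (repOfUnits G A M φ))) h1) a
  have hb := congrFun (congrArg
    (fun (f : ((coinvFunctor G).leftDerived n).obj (repOfUnits G A M φ) ⟶
        ((coinvFunctor G).leftDerived n).obj (repOfUnits G A M φ)) =>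
      (f : ((coinvFunctor G).leftDerived n).obj (repOfUnits G A M φ) →
        ((coinvFunctor G).leftDerived n).obj (repOfUnits G A M φ))) h1) b
  exact ha.trans hb.symm
end

section
/- For the finite field 𝔽_8 = 𝔽_2[α]/(α³ = α+1), the coinvariants of the diagonal action of 𝔽_8^× on the subgroup (𝔽_8 ⊗_ℤ 𝔽_8)^{-σ} generated by 1⊗1, α⊗α, α²⊗α², 1⊗α + α⊗1, 1⊗α² + α²⊗1, α²⊗α + α⊗α² are trivial. -/
open scoped TensorProduct

/-- The diagonal action of a unit `u` on `F ⊗_ℤ F`: `u · (a ⊗ b) = ua ⊗ ub`. -/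
noncomputable def diagAct {F : Type} [Field F] (u : Fˣ) : F ⊗[ℤ] F →ₗ[ℤ] F ⊗[ℤ] F :=
  TensorProduct.map (LinearMap.mulLeft ℤ (u : F)) (LinearMap.mulLeft ℤ (u : F))

/-- For `𝔽₈ = 𝔽₂[α]/(α³ = α + 1)`, the coinvariants of the diagonal `𝔽₈ˣ`-action on the
subgroup `(𝔽₈ ⊗_ℤ 𝔽₈)^{-σ}` generated by `1⊗1`, `α⊗α`, `α²⊗α²`, `1⊗α + α⊗1`,
`1⊗α² + α²⊗1`, `α²⊗α + α⊗α²` are trivial, i.e. this subgroup is contained in the subgroup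
generated by the elements `u·x - x`. -/
theorem stmt_9 (F : Type) [Field F] [Fintype F] (hF : Fintype.card F = 8)
    (α : F) (hα : α ^ 3 = α + 1) :
    let S : AddSubgroup (F ⊗[ℤ] F) := AddSubgroup.closure
      {(1 : F) ⊗ₜ[ℤ] (1 : F), α ⊗ₜ[ℤ] α, (α ^ 2) ⊗ₜ[ℤ] (α ^ 2),
       (1 : F) ⊗ₜ[ℤ] α + α ⊗ₜ[ℤ] (1 : F),
       (1 : F) ⊗ₜ[ℤ] (α ^ 2) + (α ^ 2) ⊗ₜ[ℤ] (1 : F),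
       (α ^ 2) ⊗ₜ[ℤ] α + α ⊗ₜ[ℤ] (α ^ 2)}
    let K : AddSubgroup (F ⊗[ℤ] F) := AddSubgroup.closure
      {d | ∃ u : Fˣ, ∃ x ∈ S, d = diagAct u x - x}
    S ≤ K := by
  intro S K
  -- characteristic 2
  have h8 : (8 : F) = 0 := by
    have := FiniteField.cast_card_eq_zero F
    rwa [hF] at this
  have h2 : (2 : F) = 0 := by
    obtain ⟨p, hp⟩ := CharP.exists F
    have hpp : p.Prime := CharP.char_is_prime F p
    have hdvd : p ∣ 8 := by
      have := (CharP.cast_eq_zero_iff F p 8).mp (by exact_mod_cast h8)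
      exact_mod_cast this
    have hp2 : p = 2 := by
      have : p ∣ 2 ^ 3 := by norm_num at hdvd ⊢; exact hdvd
      have := (Nat.Prime.dvd_of_dvd_pow hpp this)
      exact (Nat.prime_dvd_prime_iff_eq hpp Nat.prime_two).mp this
    have := CharP.cast_eq_zero F p
    rw [hp2] at this
    exact_mod_cast this
  have hchar : ∀ a : F, a + a = 0 := by
    intro a
    have : a + a = 2 * a := by ring
    rw [this, h2, zero_mul]
  have hα0 : α ≠ 0 := by
    intro h
    rw [h] at hα
    simp at hα
  set u : Fˣ := Units.mk0 α hα0 with hu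
  -- abbreviations
  set g1 : F ⊗[ℤ] F := (1 : F) ⊗ₜ[ℤ] (1 : F) with hg1
  set g2 : F ⊗[ℤ] F := α ⊗ₜ[ℤ] α with hg2
  set g3 : F ⊗[ℤ] F := (α ^ 2) ⊗ₜ[ℤ] (α ^ 2) with hg3
  set g4 : F ⊗[ℤ] F := (1 : F) ⊗ₜ[ℤ] α + α ⊗ₜ[ℤ] (1 : F) with hg4
  set g5 : F ⊗[ℤ] F := (1 : F) ⊗ₜ[ℤ] (α ^ 2) + (α ^ 2) ⊗ₜ[ℤ] (1 : F) with hg5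
  set g6 : F ⊗[ℤ] F := (α ^ 2) ⊗ₜ[ℤ] α + α ⊗ₜ[ℤ] (α ^ 2) with hg6
  have hg1S : g1 ∈ S := AddSubgroup.subset_closure (by simp [hg1, hg2, hg3, hg4, hg5, hg6])
  have hg2S : g2 ∈ S := AddSubgroup.subset_closure (by simp [hg1, hg2, hg3, hg4, hg5, hg6])
  have hg3S : g3 ∈ S := AddSubgroup.subset_closure (by simp [hg1, hg2, hg3, hg4, hg5, hg6])
  have hg4S : g4 ∈ S := AddSubgroup.subset_closure (by simp [hg1, hg2, hg3, hg4, hg5, hg6])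
  have hg5S : g5 ∈ S := AddSubgroup.subset_closure (by simp [hg1, hg2, hg3, hg4, hg5, hg6])
  have hg6S : g6 ∈ S := AddSubgroup.subset_closure (by simp [hg1, hg2, hg3, hg4, hg5, hg6])
  have hK : ∀ x ∈ S, diagAct u x - x ∈ K :=
    fun x hx => AddSubgroup.subset_closure ⟨u, x, hx, rfl⟩
  -- field computations
  have hm1 : α * α = α ^ 2 := by ring
  have hm2 : α * α ^ 2 = α + 1 := by rw [show α * α ^ 2 = α ^ 3 by ring, hα]
  have huv : (u : F) = α := rfl
  have hd : ∀ a b : F, diagAct u (a ⊗ₜ[ℤ] b) = ((u : F) * a) ⊗ₜ[ℤ] ((u : F) * b) :=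
    fun a b => TensorProduct.map_tmul _ _ _ _
  -- action on generators
  have d1 : diagAct u g1 = g2 := by
    simp [hd, hg1, hg2, huv, mul_one]
  have d2 : diagAct u g2 = g3 := by
    simp [hd, hg2, hg3, huv, hm1]
  have d3 : diagAct u g3 = g1 + g2 + g4 := by
    simp only [hd, hg3, TensorProduct.map_tmul, LinearMap.mulLeft_apply, huv, hm2]
    rw [TensorProduct.add_tmul, TensorProduct.tmul_add, TensorProduct.tmul_add]
    rw [hg1, hg2, hg4]
    abel
  have d4 : diagAct u g4 = g6 := by
    simp only [hd, hg4, hg6, map_add, TensorProduct.map_tmul,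
      LinearMap.mulLeft_apply, huv, mul_one, hm1]
    abel
  have d5 : diagAct u g5 = g4 := by
    simp only [hd, hg5, hg4, map_add, TensorProduct.map_tmul,
      LinearMap.mulLeft_apply, huv, mul_one, hm2]
    rw [TensorProduct.add_tmul, TensorProduct.tmul_add]
    have : α ⊗ₜ[ℤ] α + α ⊗ₜ[ℤ] α = 0 := by
      rw [← TensorProduct.add_tmul, hchar α, TensorProduct.zero_tmul]
    rw [show α ⊗ₜ[ℤ] α + α ⊗ₜ[ℤ] (1:F) + (α ⊗ₜ[ℤ] α + (1:F) ⊗ₜ[ℤ] α)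
        = (α ⊗ₜ[ℤ] α + α ⊗ₜ[ℤ] α) + ((1:F) ⊗ₜ[ℤ] α + α ⊗ₜ[ℤ] (1:F)) by abel, this,
      zero_add]
  have d6 : diagAct u g6 = g6 + g5 := by
    simp only [hd, hg6, hg5, map_add, TensorProduct.map_tmul,
      LinearMap.mulLeft_apply, huv, hm1, hm2]
    rw [TensorProduct.add_tmul, TensorProduct.tmul_add]
    abel
  -- memberships in K
  have k1 : g2 - g1 ∈ K := d1 ▸ hK g1 hg1S
  have k2 : g3 - g2 ∈ K := d2 ▸ hK g2 hg2S
  have k3 : g1 + g2 + g4 - g3 ∈ K := d3 ▸ hK g3 hg3S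
  have k4 : g6 - g4 ∈ K := d4 ▸ hK g4 hg4S
  have k5 : g4 - g5 ∈ K := d5 ▸ hK g5 hg5S
  have k6 : g5 ∈ K := by
    have := d6 ▸ hK g6 hg6S
    simpa using this
  have kg4 : g4 ∈ K := by
    have := K.add_mem k5 k6
    simpa using this
  have kg6 : g6 ∈ K := by
    have := K.add_mem k4 kg4
    simpa using this
  have kg1 : g1 ∈ K := by
    have h := K.sub_mem (K.add_mem k3 k2) kg4
    have : g1 + g2 + g4 - g3 + (g3 - g2) - g4 = g1 := by abel
    rwa [this] at h
  have kg2 : g2 ∈ K := by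
    have h := K.add_mem k1 kg1
    simpa using h
  have kg3 : g3 ∈ K := by
    have h := K.add_mem k2 kg2
    simpa using h
  -- conclude
  refine (AddSubgroup.closure_le K).mpr ?_
  intro x hx
  simp only [Set.mem_insert_iff, Set.mem_singleton_iff] at hx
  rcases hx with h | h | h | h | h | h <;> subst h
  · exact kg1
  · exact kg2
  · exact kg3
  · exact kg4
  · exact k6
  · exact kg6
end
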